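/- arXiv:1706.05264 — 2 statements merged into one kernel-verified Lean document; each statement's English description precedes it below -/
import Mathlib

section
/- Let p be a probability distribution on k elements with non-increasingly ordered entries, let δ ≥ 0, and let p̄^(δ) be the steepest δ-approximation of p. Then for every probability distribution p' on k elements with ‖p − p'‖ ≤ δ, we have p̄^(δ) ≻ p'. -/
open Finset

noncomputable section

/-- The ℓ¹ distance `‖a − b‖ = Σᵢ |aᵢ − bᵢ|` between two vectors in `ℝ^k`. -/
def l1dist {k : ℕ} (a b : Fin k → ℝ) : ℝ := ∑ i, |a i - b i|

/-- A probability distribution on `k` elements: nonnegative entries summing to 1. -/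
def IsProbDist {k : ℕ} (p : Fin k → ℝ) : Prop := (∀ i, 0 ≤ p i) ∧ ∑ i, p i = 1

/-- The vector `a` rearranged in non-increasing order, `a↓`. -/
def descSort {k : ℕ} (a : Fin k → ℝ) : Fin k → ℝ := fun i => a (Tuple.sort a i.rev)

/-- The sum of the first `l` entries of `a` (1-based indexing: entries `1,…,l`). -/
def psum {k : ℕ} (a : Fin k → ℝ) (l : ℕ) : ℝ :=
  ∑ i ∈ univ.filter (fun i : Fin k => (i : ℕ) < l), a i

/-- The sum of the entries of `a` from position `l` to `k` (1-based indexing). -/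
def tailSum {k : ℕ} (a : Fin k → ℝ) (l : ℕ) : ℝ :=
  ∑ i ∈ univ.filter (fun i : Fin k => l ≤ (i : ℕ) + 1), a i

/-- `a` majorizes `b` (`a ≻ b`): the total sums agree and all partial sums of the
non-increasing rearrangements satisfy `Σ_{i=1}^l a↓ᵢ ≥ Σ_{i=1}^l b↓ᵢ` for `l = 1,…,k`. -/
def Majorizes {k : ℕ} (a b : Fin k → ℝ) : Prop :=
  (∑ i, a i = ∑ i, b i) ∧
  ∀ l : ℕ, 1 ≤ l → l ≤ k → psum (descSort b) l ≤ psum (descSort a) l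

/-- The distribution `e₁ = (1,0,…,0)`. -/
def e1 (k : ℕ) : Fin k → ℝ := fun i => if (i : ℕ) = 0 then 1 else 0

/-- The uniform distribution `η = (1/k,…,1/k)`. -/
def unif (k : ℕ) : Fin k → ℝ := fun _ => (k : ℝ)⁻¹

/-- The unnormalised vector `r` in the construction of the steepest approximation:
`r₁ = p₁ + δ/2`, `rᵢ = pᵢ` otherwise. -/
def steepR {k : ℕ} (δ : ℝ) (p : Fin k → ℝ) : Fin k → ℝ :=
  fun i => if (i : ℕ) = 0 then p i + δ / 2 else p i

/-- `lstar ∈ {1,…,k}` is the truncation index of the steepest `δ`-approximation of `p`: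
`Σ_{i=1}^{l*} rᵢ ≤ 1 < Σ_{i=1}^{l*+1} rᵢ` (the second sum being meaningful for `l* < k`). -/
def IsTruncIdx {k : ℕ} (δ : ℝ) (p : Fin k → ℝ) (lstar : ℕ) : Prop :=
  1 ≤ lstar ∧ lstar ≤ k ∧ psum (steepR δ p) lstar ≤ 1 ∧
    (lstar < k → 1 < psum (steepR δ p) (lstar + 1))

/-- `pbar` is the steepest `δ`-approximation `p̄^(δ)` of `p` (assumed non-increasingly
ordered): if `‖p − e₁‖ ≤ δ` then `pbar = e₁`; otherwise `pbar` agrees with `r` on the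
first `l*` entries, has `1 − Σ_{i=1}^{l*} rᵢ` at position `l*+1`, and `0` afterwards. -/
def IsSteepest {k : ℕ} (δ : ℝ) (p pbar : Fin k → ℝ) : Prop :=
  (l1dist p (e1 k) ≤ δ ∧ pbar = e1 k) ∨
  (δ < l1dist p (e1 k) ∧ ∃ lstar : ℕ, IsTruncIdx δ p lstar ∧
    ∀ i : Fin k, pbar i =
      if (i : ℕ) < lstar then steepR δ p i
      else if (i : ℕ) = lstar then 1 - psum (steepR δ p) lstar
      else 0)

/-- `ε(x) = Σ_{i : pᵢ ≥ x} (pᵢ − x)`. -/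
def epsFn {k : ℕ} (p : Fin k → ℝ) (x : ℝ) : ℝ :=
  ∑ i ∈ univ.filter (fun i : Fin k => x ≤ p i), (p i - x)

/-- `γ(y) = Σ_{i : pᵢ ≤ y} (y − pᵢ)`. -/
def gammaFn {k : ℕ} (p : Fin k → ℝ) (y : ℝ) : ℝ :=
  ∑ i ∈ univ.filter (fun i : Fin k => p i ≤ y), (y - p i)

/-- `pflat` is the flattest `δ`-approximation of `p` built from the cutting level `x*` and
the filling level `y*`: `x*, y* ∈ [0,1]`, `ε(x*) = γ(y*) = δ/2`, and `pflat` equals `x*`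
where `pᵢ ≥ x*`, equals `y*` where `pᵢ ≤ y*`, and equals `pᵢ` otherwise. -/
def IsFlattestWith {k : ℕ} (δ : ℝ) (p pflat : Fin k → ℝ) (x y : ℝ) : Prop :=
  x ∈ Set.Icc (0 : ℝ) 1 ∧ y ∈ Set.Icc (0 : ℝ) 1 ∧
  epsFn p x = δ / 2 ∧ gammaFn p y = δ / 2 ∧
  ∀ i : Fin k, pflat i = if x ≤ p i then x else if p i ≤ y then y else p i

/-- `pflat` is the flattest `δ`-approximation `p̲^(δ)` of `p` (assumed non-increasingly
ordered): if `‖p − η‖ ≤ δ` then `pflat = η`; otherwise it is obtained by cutting at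
level `x*` and filling at level `y*`. -/
def IsFlattest {k : ℕ} (δ : ℝ) (p pflat : Fin k → ℝ) : Prop :=
  (l1dist p (unif k) ≤ δ ∧ pflat = unif k) ∨
  (δ < l1dist p (unif k) ∧ ∃ x y : ℝ, IsFlattestWith δ p pflat x y)

end

section Helpers

lemma descSort_of_antitone {k : ℕ} {a : Fin k → ℝ} (ha : Antitone a) : descSort a = a := by
  have hm : Monotone (a ∘ ⇑(Fin.revPerm (n := k))) := by
    intro i j hij
    exact ha (by simpa using Fin.rev_le_rev.mpr hij)
  have h := (Tuple.comp_sort_eq_comp_iff_monotone (f := a) (σ := Fin.revPerm)).mpr hm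
  funext i
  have := congrFun h.symm i.rev
  simpa [descSort, Function.comp] using this

lemma psum_succ {k : ℕ} (a : Fin k → ℝ) (l : ℕ) (hl : l < k) :
    psum a (l + 1) = psum a l + a ⟨l, hl⟩ := by
  unfold psum
  rw [show (univ.filter (fun i : Fin k => (i : ℕ) < l + 1))
      = insert ⟨l, hl⟩ (univ.filter (fun i : Fin k => (i : ℕ) < l)) by
    ext i; simp [Nat.lt_succ_iff_lt_or_eq, Fin.ext_iff, or_comm]; exact le_iff_eq_or_lt]
  rw [Finset.sum_insert (by simp)]
  ring

lemma psum_k {k : ℕ} (a : Fin k → ℝ) : psum a k = ∑ i, a i := by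
  unfold psum
  congr 1
  ext i; simp [i.isLt]

lemma sum_le_psum {k : ℕ} {p : Fin k → ℝ} (hp : Antitone p) (S : Finset (Fin k)) :
    ∑ i ∈ S, p i ≤ psum p S.card := by
  induction S using Finset.strongInduction with
  | _ S ih =>
    rcases S.eq_empty_or_nonempty with rfl | hne
    · simp [psum]
    · obtain ⟨m, hmS, hmax⟩ := S.exists_max_image id hne
      have hcard : S.card ≤ (m : ℕ) + 1 := by
        calc S.card ≤ (Finset.Iic m).card :=
              Finset.card_le_card (fun x hx => Finset.mem_Iic.mpr (hmax x hx))
        _ = (m : ℕ) + 1 := by simp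
      have hcpos : 1 ≤ S.card := Finset.card_pos.mpr hne
      have hlk : S.card - 1 < k := lt_of_le_of_lt (by omega : S.card - 1 ≤ (m : ℕ)) m.isLt
      have herase := ih (S.erase m) (Finset.erase_ssubset hmS)
      have hec : (S.erase m).card = S.card - 1 := Finset.card_erase_of_mem hmS
      have hpm : p m ≤ p ⟨S.card - 1, hlk⟩ := hp (by simp [Fin.le_def]; omega)
      have hsplit : ∑ i ∈ S, p i = ∑ i ∈ S.erase m, p i + p m := by
        rw [Finset.sum_erase_add _ _ hmS]
      rw [hsplit]
      have : psum p S.card = psum p (S.card - 1) + p ⟨S.card - 1, hlk⟩ := by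
        have := psum_succ p (S.card - 1) hlk
        rwa [Nat.sub_add_cancel hcpos] at this
      rw [this]
      exact add_le_add (hec ▸ herase) hpm

lemma exists_set_psum_descSort {k : ℕ} (q : Fin k → ℝ) {l : ℕ} (hl : l ≤ k) :
    ∃ S : Finset (Fin k), S.card = l ∧ psum (descSort q) l = ∑ i ∈ S, q i := by
  set σ : Fin k → Fin k := fun i => Tuple.sort q i.rev with hσ
  have hinj : Function.Injective σ := by
    intro a b hab
    exact Fin.rev_injective ((Tuple.sort q).injective hab)
  set T := univ.filter (fun i : Fin k => (i : ℕ) < l) with hT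
  refine ⟨T.image σ, ?_, ?_⟩
  · rw [Finset.card_image_of_injective _ hinj]
    rcases eq_or_lt_of_le hl with h | h
    · rw [show T = univ by ext i; simpa [hT] using lt_of_lt_of_le i.isLt h.ge]
      simpa using h.symm
    · rw [show T = Finset.Iio ⟨l, h⟩ by ext i; simp [hT, Fin.lt_def]]
      simp
  · rw [Finset.sum_image (fun a _ b _ h => hinj h)]
    rfl

lemma sum_sub_le_half {k : ℕ} (p p' : Fin k → ℝ) (hsum : ∑ i, p i = ∑ i, p' i)
    (S : Finset (Fin k)) : ∑ i ∈ S, (p' i - p i) ≤ l1dist p p' / 2 := by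
  have hmax : ∀ x : ℝ, x ≤ (x + |x|) / 2 := by
    intro x; rcases le_or_gt 0 x with h | h
    · rw [abs_of_nonneg h]; linarith
    · rw [abs_of_neg h]; linarith
  have h1 : ∑ i ∈ S, (p' i - p i) ≤ ∑ i ∈ S, ((p' i - p i) + |p' i - p i|) / 2 :=
    Finset.sum_le_sum fun i _ => hmax _
  have h2 : ∑ i ∈ S, ((p' i - p i) + |p' i - p i|) / 2
      ≤ ∑ i, ((p' i - p i) + |p' i - p i|) / 2 := by
    apply Finset.sum_le_sum_of_subset_of_nonneg (Finset.subset_univ S)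
    intro i _ _
    have := abs_nonneg (p' i - p i)
    have := neg_abs_le (p' i - p i)
    linarith
  have h3 : ∑ i, ((p' i - p i) + |p' i - p i|) / 2 = l1dist p p' / 2 := by
    have heq : ∑ i, ((p' i - p i) + |p' i - p i|) / 2
        = (∑ i, (p' i - p i) + ∑ i, |p' i - p i|) / 2 := by
      rw [← Finset.sum_add_distrib, ← Finset.sum_div]
    rw [heq, Finset.sum_sub_distrib, ← hsum]
    have habs : ∑ i, |p' i - p i| = l1dist p p' := by
      unfold l1dist; exact Finset.sum_congr rfl fun i _ => by rw [abs_sub_comm]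
    rw [habs]; ring
  linarith

lemma steepR_antitone {k : ℕ} {δ : ℝ} (hδ : 0 ≤ δ) {p : Fin k → ℝ} (hp : Antitone p) :
    Antitone (steepR δ p) := by
  intro i j hij
  have hle : (i : ℕ) ≤ (j : ℕ) := Fin.le_def.mp hij
  unfold steepR
  split_ifs with hj hi hi
  · have : i = j := Fin.ext (by omega)
    rw [this]
  · omega
  · have : p j ≤ p i := hp hij
    linarith
  · exact hp hij

lemma psum_steepR {k : ℕ} (δ : ℝ) (p : Fin k → ℝ) (hk : 0 < k) {l : ℕ} (hl : 1 ≤ l) :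
    psum (steepR δ p) l = psum p l + δ / 2 := by
  unfold psum steepR
  rw [show ∑ i ∈ univ.filter (fun i : Fin k => (i : ℕ) < l),
      (if (i : ℕ) = 0 then p i + δ / 2 else p i)
      = ∑ i ∈ univ.filter (fun i : Fin k => (i : ℕ) < l),
      (p i + if i = ⟨0, hk⟩ then δ / 2 else 0) from
    Finset.sum_congr rfl fun i _ => by
      by_cases h : (i : ℕ) = 0
      · simp [h, Fin.ext_iff]
      · simp [h, Fin.ext_iff]]
  rw [Finset.sum_add_distrib, Finset.sum_ite_eq' _ (⟨0, hk⟩ : Fin k)]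
  have hmem : (⟨0, hk⟩ : Fin k) ∈ univ.filter (fun i : Fin k => (i : ℕ) < l) := by
    simp; omega
  rw [if_pos hmem]

lemma e1_antitone {k : ℕ} : Antitone (e1 k) := by
  intro i j hij
  have hle : (i : ℕ) ≤ (j : ℕ) := Fin.le_def.mp hij
  unfold e1
  split_ifs with hj hi hi
  · exact le_refl 1
  · omega
  · norm_num
  · exact le_refl 0

lemma psum_e1 {k : ℕ} (hk : 0 < k) {l : ℕ} (hl : 1 ≤ l) : psum (e1 k) l = 1 := by
  unfold psum e1
  rw [show ∑ i ∈ univ.filter (fun i : Fin k => (i : ℕ) < l),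
      (if (i : ℕ) = 0 then (1 : ℝ) else 0)
      = ∑ i ∈ univ.filter (fun i : Fin k => (i : ℕ) < l),
      (if i = ⟨0, hk⟩ then (1 : ℝ) else 0) from
    Finset.sum_congr rfl fun i _ => by simp [Fin.ext_iff]]
  rw [Finset.sum_ite_eq' _ (⟨0, hk⟩ : Fin k)]
  have hmem : (⟨0, hk⟩ : Fin k) ∈ univ.filter (fun i : Fin k => (i : ℕ) < l) := by
    simp; omega
  rw [if_pos hmem]

lemma sum_e1 {k : ℕ} (hk : 0 < k) : ∑ i, e1 k i = 1 := by
  rw [← psum_k]; exact psum_e1 hk hk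

end Helpers

/-- the steepest `δ`-approximation of `p` majorizes every probability
distribution `p'` with `‖p − p'‖ ≤ δ`. -/
theorem steepest_majorizes {k : ℕ} (δ : ℝ) (hδ : 0 ≤ δ)
    (p : Fin k → ℝ) (hp : IsProbDist p) (hord : Antitone p)
    (pbar : Fin k → ℝ) (hpbar : IsSteepest δ p pbar)
    (p' : Fin k → ℝ) (hp' : IsProbDist p') (hdist : l1dist p p' ≤ δ) :
    Majorizes pbar p' := by
  obtain ⟨hp0, hp1⟩ := hp
  obtain ⟨hp'0, hp'1⟩ := hp'
  have hk : 0 < k := by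
    rcases Nat.eq_zero_or_pos k with rfl | h
    · exact absurd hp'1 (by simp)
    · exact h
  have hsum' : ∀ S : Finset (Fin k), ∑ i ∈ S, p' i ≤ 1 := by
    intro S
    calc ∑ i ∈ S, p' i ≤ ∑ i, p' i :=
          Finset.sum_le_sum_of_subset_of_nonneg (Finset.subset_univ S) (fun i _ _ => hp'0 i)
      _ = 1 := hp'1
  have hkey : ∀ S : Finset (Fin k), ∑ i ∈ S, p' i ≤ psum p S.card + δ / 2 := by
    intro S
    have h1 : ∑ i ∈ S, p' i = ∑ i ∈ S, p i + ∑ i ∈ S, (p' i - p i) := by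
      rw [← Finset.sum_add_distrib]; exact Finset.sum_congr rfl fun i _ => by ring
    have h2 := sum_le_psum hord S
    have h3 := sum_sub_le_half p p' (hp1.trans hp'1.symm) S
    have h4 : l1dist p p' / 2 ≤ δ / 2 := by linarith
    linarith
  rcases hpbar with ⟨hd, rfl⟩ | ⟨hdlt, lstar, ⟨h1l, hlstk, hle1, hgt⟩, hdef⟩
  · constructor
    · rw [sum_e1 hk, hp'1]
    · intro l hl1 hlk2
      rw [descSort_of_antitone (e1_antitone), psum_e1 hk hl1]
      obtain ⟨S, hScard, hSeq⟩ := exists_set_psum_descSort p' hlk2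
      rw [hSeq]; exact hsum' S
  · have hr0 : ∀ i, 0 ≤ steepR δ p i := by
      intro i; unfold steepR; split_ifs
      · have := hp0 i; linarith
      · exact hp0 i
    have hrant : Antitone (steepR δ p) := steepR_antitone hδ hord
    have hub : ∀ h : lstar < k,
        1 - psum (steepR δ p) lstar < steepR δ p ⟨lstar, h⟩ := by
      intro h
      have hg := hgt h
      rw [psum_succ _ _ h] at hg
      linarith
    have hpbar_ant : Antitone pbar := by
      intro i j hij
      have hle : (i : ℕ) ≤ (j : ℕ) := Fin.le_def.mp hij
      rw [hdef i, hdef j]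
      rcases lt_trichotomy ((j : ℕ)) lstar with hj | hj | hj
      · rw [if_pos hj, if_pos (by omega)]
        exact hrant hij
      · rw [if_neg (by omega), if_pos hj]
        rcases eq_or_lt_of_le hle with he | hlt
        · rw [if_neg (by omega), if_pos (by omega)]
        · have hilt : (i : ℕ) < lstar := by omega
          rw [if_pos hilt]
          have hjk : lstar < k := hj ▸ j.isLt
          have h1 := hub hjk
          have h2 : steepR δ p ⟨lstar, hjk⟩ ≤ steepR δ p i :=
            hrant (by rw [Fin.le_def]; simpa using le_of_lt hilt)
          linarith
      · rw [if_neg (by omega), if_neg (by omega)]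
        split_ifs with h1 h2
        · exact hr0 i
        · linarith
        · exact le_refl 0
    have hpsum_le : ∀ l : ℕ, l ≤ lstar → psum pbar l = psum (steepR δ p) l := by
      intro l hl
      unfold psum
      refine Finset.sum_congr rfl fun i hi => ?_
      simp only [Finset.mem_filter] at hi
      rw [hdef i, if_pos (by omega)]
    have hpsum_gt : ∀ l : ℕ, lstar < l → l ≤ k → psum pbar l = 1 := by
      intro l h1 h2
      have hlsk : lstar < k := lt_of_lt_of_le h1 h2
      have step : psum pbar l = psum pbar (lstar + 1) := by
        unfold psum
        symm
        apply Finset.sum_subset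
        · intro i hi
          simp only [Finset.mem_filter, Finset.mem_univ, true_and] at hi ⊢
          omega
        · intro i hi1 hi2
          simp only [Finset.mem_filter, Finset.mem_univ, true_and] at hi1 hi2
          rw [hdef i, if_neg (by omega), if_neg (by omega)]
      rw [step, psum_succ _ _ hlsk, hpsum_le lstar le_rfl, hdef ⟨lstar, hlsk⟩,
        if_neg (by simp), if_pos rfl]
      ring
    have hsum_pbar : ∑ i, pbar i = 1 := by
      rw [← psum_k]
      rcases eq_or_lt_of_le hlstk with h | h
      · have hkl : 1 ≤ k := hk
        have hr := hle1
        rw [h, psum_steepR δ p hk hkl, psum_k, hp1] at hr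
        have hδ0 : δ = 0 := le_antisymm (by linarith) hδ
        rw [hpsum_le k h.ge, psum_steepR δ p hk hkl, psum_k, hp1, hδ0]
        ring
      · exact hpsum_gt k h le_rfl
    constructor
    · rw [hsum_pbar, hp'1]
    · intro l hl1 hlk2
      rw [descSort_of_antitone hpbar_ant]
      obtain ⟨S, hScard, hSeq⟩ := exists_set_psum_descSort p' hlk2
      rw [hSeq]
      rcases le_or_gt l lstar with hcase | hcase
      · have hkS := hkey S
        rw [hScard] at hkS
        rw [hpsum_le l hcase, psum_steepR δ p hk hl1]
        linarith
      · rw [hpsum_gt l hcase hlk2]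
        exact hsum' S
end

section
/- Let p be a probability distribution on k elements with non-increasingly ordered entries, let δ ≥ 0, and let p̲^(δ) be the flattest δ-approximation of p. Then for every probability distribution p' on k elements with ‖p − p'‖ ≤ δ, we have p' ≻ p̲^(δ). -/
open Finset

section Aux

open Finset

lemma sum_posPart_eq_half_l1 {k : ℕ} (a b : Fin k → ℝ) (h : ∑ i, a i = ∑ i, b i) :
    ∑ i, max (a i - b i) 0 = l1dist a b / 2 := by
  have key : ∀ i, max (a i - b i) 0 = (|a i - b i| + (a i - b i)) / 2 := by
    intro i
    rcases le_total (a i - b i) 0 with hc | hc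
    · rw [max_eq_right hc, abs_of_nonpos hc]; ring
    · rw [max_eq_left hc, abs_of_nonneg hc]; ring
  rw [Finset.sum_congr rfl (fun i _ => key i)]
  rw [← Finset.sum_div, Finset.sum_add_distrib, Finset.sum_sub_distrib, h, sub_self,
    add_zero, l1dist]

lemma epsFn_eq {k : ℕ} (p : Fin k → ℝ) (c : ℝ) :
    epsFn p c = ∑ i, max (p i - c) 0 := by
  rw [epsFn, Finset.sum_filter]
  refine Finset.sum_congr rfl fun i _ => ?_
  split_ifs with h
  · rw [max_eq_left (by linarith)]
  · rw [max_eq_right (by push_neg at h; linarith)]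

lemma gammaFn_eq {k : ℕ} (p : Fin k → ℝ) (c : ℝ) :
    gammaFn p c = ∑ i, max (c - p i) 0 := by
  rw [gammaFn, Finset.sum_filter]
  refine Finset.sum_congr rfl fun i _ => ?_
  split_ifs with h
  · rw [max_eq_left (by linarith)]
  · rw [max_eq_right (by push_neg at h; linarith)]

lemma epsFn_anti {k : ℕ} (p : Fin k → ℝ) {x x' : ℝ} (h : x ≤ x') :
    epsFn p x' ≤ epsFn p x := by
  rw [epsFn_eq, epsFn_eq]
  exact Finset.sum_le_sum fun i _ => max_le_max (by linarith) le_rfl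

lemma gammaFn_mono {k : ℕ} (p : Fin k → ℝ) {y y' : ℝ} (h : y ≤ y') :
    gammaFn p y ≤ gammaFn p y' := by
  rw [gammaFn_eq, gammaFn_eq]
  exact Finset.sum_le_sum fun i _ => max_le_max (by linarith) le_rfl

lemma sum_comp_descSort {k : ℕ} (a : Fin k → ℝ) (g : ℝ → ℝ) :
    ∑ i, g (descSort a i) = ∑ i, g (a i) := by
  have h : ∀ i : Fin k, descSort a i = a ((Fin.revPerm.trans (Tuple.sort a)) i) :=
    fun i => rfl
  rw [Finset.sum_congr rfl (fun i _ => by rw [h i])]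
  exact Equiv.sum_comp (Fin.revPerm.trans (Tuple.sort a)) (fun j => g (a j))

lemma descSort_antitone {k : ℕ} (a : Fin k → ℝ) : Antitone (descSort a) := by
  intro i j hij
  exact Tuple.monotone_sort a (Fin.rev_le_rev.mpr hij)

lemma card_filter_lt {k l : ℕ} (h : l ≤ k) :
    (univ.filter (fun i : Fin k => (i : ℕ) < l)).card = l := by
  refine Finset.card_eq_of_bijective (fun i hi => ⟨i, lt_of_lt_of_le hi h⟩) ?_ ?_ ?_
  · intro a ha
    simp only [mem_filter, mem_univ, true_and] at ha
    exact ⟨a, ha, by simp⟩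
  · intro i hi
    simp [hi]
  · intro i j hi hj hij
    simpa using congrArg Fin.val hij

lemma psum_le {k l : ℕ} (hlk : l ≤ k) (a : Fin k → ℝ) (t : ℝ) :
    psum (descSort a) l ≤ l * t + ∑ i, max (a i - t) 0 := by
  rw [← sum_comp_descSort a (fun c => max (c - t) 0)]
  rw [psum]
  have h1 : ∑ i ∈ univ.filter (fun i : Fin k => (i : ℕ) < l), descSort a i ≤
      ∑ i ∈ univ.filter (fun i : Fin k => (i : ℕ) < l), (t + max (descSort a i - t) 0) := by
    refine Finset.sum_le_sum fun i _ => ?_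
    have := le_max_left (descSort a i - t) 0
    linarith
  refine h1.trans ?_
  rw [Finset.sum_add_distrib, Finset.sum_const, card_filter_lt hlk, nsmul_eq_mul]
  have h2 : ∑ i ∈ univ.filter (fun i : Fin k => (i : ℕ) < l), max (descSort a i - t) 0 ≤
      ∑ i : Fin k, max (descSort a i - t) 0 :=
    Finset.sum_le_sum_of_subset_of_nonneg (Finset.subset_univ _)
      fun i _ _ => le_max_right _ _
  linarith

lemma psum_eq {k l : ℕ} (hl : 1 ≤ l) (hlk : l ≤ k) (a : Fin k → ℝ) :
    ∃ t : ℝ, psum (descSort a) l = l * t + ∑ i, max (a i - t) 0 := by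
  have hl1 : l - 1 < k := lt_of_lt_of_le (Nat.sub_lt hl one_pos) hlk
  set d := descSort a with hd
  set t := d ⟨l - 1, hl1⟩ with ht
  refine ⟨t, ?_⟩
  rw [← sum_comp_descSort a (fun c => max (c - t) 0), ← hd]
  have hsplit := Finset.sum_filter_add_sum_filter_not univ
    (fun i : Fin k => (i : ℕ) < l) (fun i => max (d i - t) 0)
  have h1 : ∑ i ∈ univ.filter (fun i : Fin k => (i : ℕ) < l), max (d i - t) 0 =
      ∑ i ∈ univ.filter (fun i : Fin k => (i : ℕ) < l), (d i - t) := by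
    refine Finset.sum_congr rfl fun i hi => ?_
    simp only [mem_filter, mem_univ, true_and] at hi
    have hle : t ≤ d i := by
      apply descSort_antitone a
      rw [Fin.le_def]
      exact Nat.le_sub_one_of_lt hi
    exact max_eq_left (by linarith)
  have h2 : ∑ i ∈ univ.filter (fun i : Fin k => ¬ (i : ℕ) < l), max (d i - t) 0 = 0 := by
    refine Finset.sum_eq_zero fun i hi => ?_
    simp only [mem_filter, mem_univ, true_and, not_lt] at hi
    have hge : d i ≤ t := by
      apply descSort_antitone a
      rw [Fin.le_def]
      simp only []
      omega
    exact max_eq_right (by linarith)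
  rw [← hsplit, h1, h2, add_zero, Finset.sum_sub_distrib, Finset.sum_const,
    card_filter_lt hlk, nsmul_eq_mul, psum]
  ring

lemma k_pos_of_prob {k : ℕ} (p : Fin k → ℝ) (hp : IsProbDist p) : 0 < k := by
  rcases Nat.eq_zero_or_pos k with h | h
  · exfalso
    have h2 := hp.2
    subst h
    simp at h2
  · exact h

lemma sum_unif_eq_one {k : ℕ} (hk : 0 < k) : ∑ i : Fin k, unif k i = 1 := by
  have hkR : ((k : ℝ)) ≠ 0 := by positivity
  simp only [unif, Finset.sum_const, Finset.card_univ, Fintype.card_fin, nsmul_eq_mul]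
  field_simp

lemma y_le_x {k : ℕ} {δ : ℝ} (p : Fin k → ℝ) (hp : IsProbDist p)
    (hfar : δ < l1dist p (unif k)) {x y : ℝ}
    (hex : epsFn p x = δ / 2) (hgy : gammaFn p y = δ / 2) : y ≤ x := by
  have hk := k_pos_of_prob p hp
  have hsu := sum_unif_eq_one (k := k) hk
  have hhalf : epsFn p ((k:ℝ)⁻¹) = l1dist p (unif k) / 2 := by
    rw [epsFn_eq]
    exact sum_posPart_eq_half_l1 p (unif k) (by rw [hp.2, hsu])
  have hhalf' : gammaFn p ((k:ℝ)⁻¹) = l1dist p (unif k) / 2 := by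
    rw [gammaFn_eq]
    have h := sum_posPart_eq_half_l1 (unif k) p (by rw [hp.2, hsu])
    have hsymm : l1dist (unif k) p = l1dist p (unif k) := by
      simp [l1dist, abs_sub_comm]
    rw [hsymm] at h
    simpa [unif] using h
  have hxk : (k:ℝ)⁻¹ < x := by
    by_contra hcon
    push_neg at hcon
    have h := epsFn_anti p hcon
    rw [hex, hhalf] at h
    linarith
  have hyk : y < (k:ℝ)⁻¹ := by
    by_contra hcon
    push_neg at hcon
    have h := gammaFn_mono p hcon
    rw [hgy, hhalf'] at h
    linarith
  linarith

lemma flat_sum_one {k : ℕ} {δ : ℝ}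
    (p : Fin k → ℝ) (hp : IsProbDist p)
    (pflat : Fin k → ℝ) (hpflat : IsFlattest δ p pflat) :
    ∑ i, pflat i = 1 := by
  have hk := k_pos_of_prob p hp
  rcases hpflat with ⟨_, rfl⟩ | ⟨hfar, x, y, hx01, hy01, hex, hgy, hflat⟩
  · exact sum_unif_eq_one hk
  · have hxy : y ≤ x := y_le_x p hp hfar hex hgy
    have key : ∀ i, pflat i - p i =
        (if p i ≤ y then y - p i else 0) - (if x ≤ p i then p i - x else 0) := by
      intro i
      rw [hflat i]
      split_ifs with h1 h2 <;> linarith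
    have h : ∑ i, (pflat i - p i) = gammaFn p y - epsFn p x := by
      rw [Finset.sum_congr rfl (fun i _ => key i), Finset.sum_sub_distrib,
        gammaFn, epsFn, Finset.sum_filter, Finset.sum_filter]
    rw [Finset.sum_sub_distrib, hp.2] at h
    rw [hgy, hex] at h
    linarith

lemma flat_levelset_le {k : ℕ} {δ : ℝ}
    (p : Fin k → ℝ) (hp : IsProbDist p)
    (pflat : Fin k → ℝ) (hpflat : IsFlattest δ p pflat)
    (p' : Fin k → ℝ) (hp' : IsProbDist p') (hdist : l1dist p p' ≤ δ) (t : ℝ) :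
    ∑ i, max (pflat i - t) 0 ≤ ∑ i, max (p' i - t) 0 := by
  have hk := k_pos_of_prob p hp
  have hsumflat := flat_sum_one p hp pflat hpflat
  have hlow0 : (0:ℝ) ≤ ∑ i, max (p' i - t) 0 :=
    Finset.sum_nonneg fun i _ => le_max_right _ _
  have hlow1 : 1 - (k:ℝ) * t ≤ ∑ i, max (p' i - t) 0 := by
    have h : ∑ i, (p' i - t) ≤ ∑ i, max (p' i - t) 0 :=
      Finset.sum_le_sum fun i _ => le_max_left _ _
    rw [Finset.sum_sub_distrib, hp'.2, Finset.sum_const, Finset.card_univ,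
      Fintype.card_fin, nsmul_eq_mul] at h
    exact h
  rcases hpflat with ⟨_, rfl⟩ | ⟨hfar, x, y, hx01, hy01, hex, hgy, hflat⟩
  · rcases le_or_gt ((k:ℝ)⁻¹) t with h | h
    · have hz : ∑ i : Fin k, max (unif k i - t) 0 = 0 :=
        Finset.sum_eq_zero fun i _ => max_eq_right (by simp only [unif]; linarith)
      rw [hz]; exact hlow0
    · have hz : ∑ i : Fin k, max (unif k i - t) 0 = 1 - (k:ℝ) * t := by
        rw [Finset.sum_congr rfl
          (fun i _ => max_eq_left (by simp only [unif, sub_nonneg]; linarith))]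
        rw [Finset.sum_sub_distrib, hsumflat, Finset.sum_const, Finset.card_univ,
          Fintype.card_fin, nsmul_eq_mul]
      rw [hz]; exact hlow1
  · have hxy : y ≤ x := y_le_x p hp hfar hex hgy
    rcases lt_or_ge t y with hty | hty
    · have hz : ∑ i, max (pflat i - t) 0 = 1 - (k:ℝ) * t := by
        have key : ∀ i, max (pflat i - t) 0 = pflat i - t := by
          intro i
          refine max_eq_left ?_
          rw [hflat i]
          split_ifs with h1 h2 <;> linarith
        rw [Finset.sum_congr rfl (fun i _ => key i), Finset.sum_sub_distrib, hsumflat,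
          Finset.sum_const, Finset.card_univ, Fintype.card_fin, nsmul_eq_mul]
      rw [hz]; exact hlow1
    rcases le_or_gt x t with htx | htx
    · have hz : ∑ i, max (pflat i - t) 0 = 0 := by
        refine Finset.sum_eq_zero fun i _ => ?_
        refine max_eq_right ?_
        rw [hflat i]
        split_ifs with h1 h2 <;> linarith
      rw [hz]; exact hlow0
    · have key : ∀ i, max (p i - t) 0 - max (pflat i - t) 0 =
          if x ≤ p i then p i - x else 0 := by
        intro i
        rw [hflat i]
        split_ifs with h1 h2
        · rw [max_eq_left (by linarith), max_eq_left (by linarith)]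
          ring
        · rw [max_eq_right (by linarith), max_eq_right (by linarith)]
          ring
        · ring
      have heq : ∑ i, max (pflat i - t) 0 = (∑ i, max (p i - t) 0) - δ / 2 := by
        have h : ∑ i, (max (p i - t) 0 - max (pflat i - t) 0) = epsFn p x := by
          rw [Finset.sum_congr rfl (fun i _ => key i), epsFn, Finset.sum_filter]
        rw [Finset.sum_sub_distrib] at h
        rw [hex] at h
        linarith
      rw [heq]
      have hpw : ∀ i, max (p i - t) 0 ≤ max (p' i - t) 0 + max (p i - p' i) 0 := by
        intro i
        refine max_le ?_ ?_
        · have h1 := le_max_left (p' i - t) 0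
          have h2 := le_max_left (p i - p' i) 0
          linarith
        · have h1 := le_max_right (p' i - t) 0
          have h2 := le_max_right (p i - p' i) 0
          linarith
      have hsum' : ∑ i, max (p i - p' i) 0 = l1dist p p' / 2 :=
        sum_posPart_eq_half_l1 p p' (by rw [hp.2, hp'.2])
      have h := Finset.sum_le_sum (fun i (_ : i ∈ (univ : Finset (Fin k))) => hpw i)
      rw [Finset.sum_add_distrib, hsum'] at h
      linarith

end Aux


/-- the flattest `δ`-approximation of `p` is majorized by every probability
distribution `p'` with `‖p − p'‖ ≤ δ`. -/
theorem flattest_is_majorized {k : ℕ} (δ : ℝ) (hδ : 0 ≤ δ)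
    (p : Fin k → ℝ) (hp : IsProbDist p) (hord : Antitone p)
    (pflat : Fin k → ℝ) (hpflat : IsFlattest δ p pflat)
    (p' : Fin k → ℝ) (hp' : IsProbDist p') (hdist : l1dist p p' ≤ δ) :
    Majorizes p' pflat := by
  constructor
  · rw [hp'.2, flat_sum_one p hp pflat hpflat]
  · intro l hl hlk
    obtain ⟨t, ht⟩ := psum_eq hl hlk p'
    calc psum (descSort pflat) l
        ≤ l * t + ∑ i, max (pflat i - t) 0 := psum_le hlk pflat t
      _ ≤ l * t + ∑ i, max (p' i - t) 0 := by
          have := flat_levelset_le p hp pflat hpflat p' hp' hdist t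
          linarith
      _ = psum (descSort p') l := ht.symm
end
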